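/- Let R be a commutative ℚ(q)-algebra and let H(z) = ∑_{n≥0} h_n z^n and E(z) = ∑_{n≥0} (-1)^n e_n z^n be formal power series over R with h_0 = e_0 = 1 and H(z)·E(z) = 1. Then H(qz)·E(q^{-1}z) = 1 + (q - q^{-1})·∑_{n≥1} (-q)^{-n} (∑_{m=0}^n (-q)^m [m] h_m e_{n-m}) z^n, where [m] = (q^m - q^{-m})/(q - q^{-1}). -/

import Mathlib

noncomputable def q : RatFunc ℚ := RatFunc.X

/-- The quantum integer [n] = (q^n - q^{-n})/(q - q^{-1}) in ℚ(q). -/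
noncomputable def qint (n : ℤ) : RatFunc ℚ := (q ^ n - q ^ (-n)) / (q - q⁻¹)

lemma hq0 : (q : RatFunc ℚ) ≠ 0 := RatFunc.X_ne_zero

lemma hq2 : (q : RatFunc ℚ)^2 - 1 ≠ 0 := by
  have h1 : (q : RatFunc ℚ)^2 - 1 = algebraMap (Polynomial ℚ) (RatFunc ℚ) (Polynomial.X^2 - 1) := by
    simp [q]
  rw [h1]
  intro hcon
  have h2 := (map_eq_zero_iff _ (IsFractionRing.injective (Polynomial ℚ) (RatFunc ℚ))).mp hcon
  have := congrArg (Polynomial.coeff · 2) h2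
  simp [Polynomial.coeff_one] at this

lemma hqq : (q : RatFunc ℚ) - q⁻¹ ≠ 0 := by
  have hrw : (q : RatFunc ℚ) - q⁻¹ = (q^2 - 1)/q := by
    rw [eq_div_iff hq0, sub_mul, inv_mul_cancel₀ hq0]
    ring
  rw [hrw]
  exact div_ne_zero hq2 hq0

lemma qint_mul (m : ℤ) : ((q : RatFunc ℚ) - q⁻¹) * qint m = q ^ m - q ^ (-m) := by
  rw [qint, mul_comm, div_mul_cancel₀ _ hqq]

lemma key (m k : ℕ) : (q:RatFunc ℚ)^m * (q⁻¹)^k * (-1)^k =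
    (q - q⁻¹) * (-q) ^ (-((m+k : ℕ) : ℤ)) * ((-q)^m * qint m) + (q⁻¹)^(m+k) * (-1)^k := by
  have hm : ((q:RatFunc ℚ) - q⁻¹) * (-q) ^ (-((m+k:ℕ):ℤ)) * ((-q)^m * qint m)
      = (-q) ^ (-((m+k:ℕ):ℤ)) * (-q)^m * ((q - q⁻¹) * qint m) := by ring
  rw [hm, qint_mul]
  rw [zpow_neg, zpow_natCast, zpow_neg, zpow_natCast]
  field_simp [hq0]
  ring_nf
  simp [pow_mul', neg_one_sq, one_pow]
  have h1 : (q:RatFunc ℚ)^k * (q^k)⁻¹ = 1 := mul_inv_cancel₀ (pow_ne_zero _ hq0)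
  have h2 : (q:RatFunc ℚ)^m * (q^m)⁻¹ = 1 := mul_inv_cancel₀ (pow_ne_zero _ hq0)
  linear_combination ((q^3)^m*(-1)^m - q^m*(-1)^m) * h1 - q^m*(-1)^m*(q^k * (q^k)⁻¹) * h2

open PowerSeries Finset in
theorem halves_of_vertex_operators_plus {R : Type*} [CommRing R] [Algebra (RatFunc ℚ) R]
    (h e : ℕ → R) (h0 : h 0 = 1) (e0 : e 0 = 1)
    (H E : PowerSeries R)
    (hH : H = PowerSeries.mk fun n => h n)
    (hE : E = PowerSeries.mk fun n => (-1 : R) ^ n * e n)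
    (hHE : H * E = 1) :
    PowerSeries.rescale (algebraMap (RatFunc ℚ) R q) H *
        PowerSeries.rescale (algebraMap (RatFunc ℚ) R q⁻¹) E =
      1 + PowerSeries.mk (fun n => if n = 0 then 0 else
        algebraMap (RatFunc ℚ) R ((q - q⁻¹) * (-q) ^ (-(n : ℤ))) *
          ∑ m ∈ Finset.range (n + 1),
            algebraMap (RatFunc ℚ) R ((-q) ^ m * qint m) * (h m * e (n - m))) := by
  subst hH hE
  set a := algebraMap (RatFunc ℚ) R with ha
  ext n
  rw [PowerSeries.coeff_mul, Finset.Nat.sum_antidiagonal_eq_sum_range_succ_mk,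
    map_add, PowerSeries.coeff_one, PowerSeries.coeff_mk]
  simp only [PowerSeries.coeff_rescale, PowerSeries.coeff_mk]
  rcases eq_or_ne n 0 with hn | hn
  · subst hn
    simp [h0, e0]
  · have h1 := congrArg (PowerSeries.coeff n) hHE
    rw [PowerSeries.coeff_mul, Finset.Nat.sum_antidiagonal_eq_sum_range_succ_mk] at h1
    simp only [PowerSeries.coeff_mk, PowerSeries.coeff_one, hn, if_neg hn, if_false, Nat.succ_eq_add_one] at h1
    simp only [hn, if_neg hn, if_false, zero_add]
    rw [Finset.mul_sum]
    have hterm : ∀ m ∈ Finset.range (n + 1),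
        a q ^ m * h m * (a q⁻¹ ^ (n - m) * ((-1 : R) ^ (n - m) * e (n - m))) =
          a ((q - q⁻¹) * (-q) ^ (-(n : ℤ))) * (a ((-q) ^ m * qint m) * (h m * e (n - m)))
            + a q⁻¹ ^ n * (h m * ((-1 : R) ^ (n - m) * e (n - m))) := by
      intro m hm
      have hmn : m + (n - m) = n := Nat.add_sub_cancel' (Nat.lt_succ_iff.mp (Finset.mem_range.mp hm))
      have hk := key m (n - m)
      rw [hmn] at hk
      have hk2 := congrArg a hk
      simp only [map_add, map_mul, map_pow, map_neg, map_one] at hk2 ⊢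
      linear_combination (h m * e (n - m)) * hk2
    have h2 : ∑ x ∈ Finset.range (n + 1), a q⁻¹ ^ n * (h x * ((-1 : R) ^ (n - x) * e (n - x))) = 0 := by
      rw [← Finset.mul_sum, h1, mul_zero]
    rw [Finset.sum_congr rfl hterm, Finset.sum_add_distrib, h2, add_zero]
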